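/- arXiv:2101.05011 — 2 statements merged into one kernel-verified Lean document; each statement's English description precedes it below -/
import Mathlib

section
/- Let X, U, ∂X be Banach spaces, Z ⊂ X a dense subspace, A_m : Z → X a closed linear operator, and G : Z → ∂X a surjective linear operator such that the restriction A of A_m to ker G generates a C₀-semigroup on X. Then for every μ in the resolvent set of A, the restriction of G to ker(μ − A_m) is a bijection onto ∂X; i.e., for every u ∈ ∂X there exists a unique z ∈ Z with A_m z = μ z and G z = u. -/
open scoped Topology

/-- A strongly continuous semigroup of bounded operators (on `t ≥ 0`). -/
def IsC0Semigroup {X : Type*} [NormedAddCommGroup X] [NormedSpace ℂ X]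
    (T : ℝ → (X →L[ℂ] X)) : Prop :=
  T 0 = 1 ∧ (∀ s t : ℝ, 0 ≤ s → 0 ≤ t → T (s + t) = T s ∘L T t) ∧
    ∀ x : X, ContinuousOn (fun t => T t x) (Set.Ici (0 : ℝ))

/-- In the boundary control setting, for every `μ` in the resolvent set of
`A = A_m|_{ker G}`, the restriction of `G` to `ker (μ - A_m)` is a bijection onto `∂X`. -/
theorem stmt_3 {X U : Type*} [NormedAddCommGroup X] [NormedSpace ℂ X] [CompleteSpace X]
    [NormedAddCommGroup U] [NormedSpace ℂ U] [CompleteSpace U]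
    (Z : Submodule ℂ X) (hZdense : Dense (Z : Set X))
    (Am : X →ₗ[ℂ] X) (G : X →ₗ[ℂ] U)
    (hclosed : IsClosed {q : X × X | q.1 ∈ Z ∧ Am q.1 = q.2})
    (hGbdd : ∃ c : ℝ, ∀ z ∈ Z, ‖G z‖ ≤ c * (‖z‖ + ‖Am z‖))
    (hGsurj : ∀ u : U, ∃ z ∈ Z, G z = u)
    (T : ℝ → (X →L[ℂ] X)) (hT : IsC0Semigroup T)
    (hgen : ∀ z ∈ Z, G z = 0 → HasDerivWithinAt (fun t => T t z) (Am z) (Set.Ici 0) 0)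
    -- `μ` belongs to the resolvent set of `A`, with resolvent `R`:
    (μ : ℂ) (R : X →L[ℂ] X)
    (hR1 : ∀ x : X, R x ∈ Z ∧ G (R x) = 0 ∧ μ • R x - Am (R x) = x)
    (hR2 : ∀ z ∈ Z, G z = 0 → R (μ • z - Am z) = z) :
    ∀ u : U, ∃! z : X, z ∈ Z ∧ Am z = μ • z ∧ G z = u := by
  intro u
  obtain ⟨z₀, hz₀Z, hGz₀⟩ := hGsurj u
  set x := μ • z₀ - Am z₀ with hx
  obtain ⟨hRZ, hGR, hRes⟩ := hR1 x
  refine ⟨z₀ - R x, ⟨Z.sub_mem hz₀Z hRZ, ?_, ?_⟩, ?_⟩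
  · have := hRes
    simp only [map_sub, smul_sub] at this ⊢
    have := sub_eq_zero.mpr this.symm
    linear_combination (norm := module) -this
  · simp [map_sub, hGz₀, hGR]
  · rintro z ⟨hzZ, hAmz, hGz⟩
    have hw : z - z₀ + R x ∈ Z := Z.add_mem (Z.sub_mem hzZ hz₀Z) hRZ
    have hGw : G (z - z₀ + R x) = 0 := by simp [map_sub, hGz, hGz₀, hGR]
    have h2 := hR2 _ hw hGw
    have key : μ • (z - z₀ + R x) - Am (z - z₀ + R x) = 0 := by
      simp only [map_add, map_sub, smul_add, smul_sub, hAmz]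
      have := hRes
      linear_combination (norm := module) this
    rw [key, map_zero] at h2
    have : z - z₀ + R x = 0 := h2.symm
    linear_combination (norm := module) this
end

section
/- Consider the 2×2 operator block relation: suppose μ ∈ ρ(A), D_μ is the Dirichlet operator, and M : Z → ∂X a bounded operator (for the graph norm). If 1 ∈ ρ(M D_μ) (i.e., I_{∂X} − M D_μ is invertible), then μ belongs to the resolvent set of A_{G,M} := A_m with domain {z ∈ Z : G z = M z}, and R(μ, A_{G,M}) = (I + D_μ (I_{∂X} − M D_μ)^{-1} M) R(μ, A). Moreover R(μ, A_{G,M}) B K = D_μ (I − M D_μ)^{-1} K for any bounded K into ∂X, where B = (μ−A_{-1})D_μ. -/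
/-- If `1 ∈ ρ(M D_μ)`, then `μ` is in the resolvent set of `A_{G,M} = A_m` with domain
`{z ∈ Z : G z = M z}`, and `R(μ, A_{G,M}) = (I + D_μ (I - M D_μ)⁻¹ M) R(μ,A)`; moreover
`R(μ, A_{G,M}) B K = D_μ (I - M D_μ)⁻¹ K`, expressed by the property that for every
boundary value `u`, `y = D_μ (I - M D_μ)⁻¹ u` solves `A_m y = μ y`, `G y - M y = u`. -/
theorem stmt_19 {X U : Type*} [NormedAddCommGroup X] [NormedSpace ℂ X] [CompleteSpace X]
    [NormedAddCommGroup U] [NormedSpace ℂ U] [CompleteSpace U]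
    (Z : Submodule ℂ X) (hZdense : Dense (Z : Set X))
    (Am : X →ₗ[ℂ] X) (G Mb : X →ₗ[ℂ] U)
    (hGsurj : ∀ u : U, ∃ z ∈ Z, G z = u)
    -- `μ` in the resolvent set of `A = A_m|_{ker G}`, with resolvent `R`:
    (μ : ℂ) (R : X →L[ℂ] X)
    (hR1 : ∀ x : X, R x ∈ Z ∧ G (R x) = 0 ∧ μ • R x - Am (R x) = x)
    (hR2 : ∀ z ∈ Z, G z = 0 → R (μ • z - Am z) = z)
    -- the Dirichlet operator `D_μ`, inverse of `G` on `ker (μ - A_m)`: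
    (D : U →ₗ[ℂ] X)
    (hD : ∀ u : U, D u ∈ Z ∧ Am (D u) = μ • D u ∧ G (D u) = u)
    (hD2 : ∀ z ∈ Z, Am z = μ • z → z = D (G z))
    -- `V = (I_{∂X} - M D_μ)⁻¹`, i.e. `1 ∈ ρ(M D_μ)`:
    (V : U →ₗ[ℂ] U)
    (hV1 : ∀ u : U, V u - Mb (D (V u)) = u)
    (hV2 : ∀ u : U, V (u - Mb (D u)) = u) :
    (∀ x : X,
      (R x + D (V (Mb (R x))) ∈ Z ∧
        G (R x + D (V (Mb (R x)))) = Mb (R x + D (V (Mb (R x)))) ∧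
        μ • (R x + D (V (Mb (R x)))) - Am (R x + D (V (Mb (R x)))) = x) ∧
      ∀ z : X, z ∈ Z → G z = Mb z → μ • z - Am z = x →
        z = R x + D (V (Mb (R x)))) ∧
    (∀ u : U, D (V u) ∈ Z ∧ Am (D (V u)) = μ • D (V u) ∧
      G (D (V u)) - Mb (D (V u)) = u) := by
  refine ⟨fun x => ?_, fun u => ?_⟩
  · obtain ⟨hRZ, hRG, hRres⟩ := hR1 x
    set u₀ := Mb (R x) with hu₀
    obtain ⟨hDZ, hDAm, hDG⟩ := hD (V u₀)
    set y := R x + D (V u₀) with hy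
    have hyZ : y ∈ Z := Z.add_mem hRZ hDZ
    have hGy : G y = Mb y := by
      have h1 : V u₀ = u₀ + Mb (D (V u₀)) := sub_eq_iff_eq_add.mp (hV1 u₀)
      simp only [hy, map_add, hRG, hDG, zero_add, ← hu₀]
      exact h1
    have hres : μ • y - Am y = x := by
      simp only [hy, smul_add, map_add, hDAm]
      rw [add_sub_add_right_eq_sub]
      exact hRres
    refine ⟨⟨hyZ, hGy, hres⟩, fun z hzZ hzG hzres => ?_⟩
    have hwZ : z - y ∈ Z := Z.sub_mem hzZ hyZ
    have hwAm : Am (z - y) = μ • (z - y) := by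
      simp only [map_sub, smul_sub]
      have h := hzres.trans hres.symm
      exact (sub_eq_sub_iff_sub_eq_sub.mp h).symm
    have hw := hD2 (z - y) hwZ hwAm
    have hGw : G (z - y) = Mb (z - y) := by
      simp only [map_sub, hzG, hGy]
    rw [hGw] at hw
    have h0 : Mb (z - y) = 0 := by
      have := hV2 (Mb (z - y))
      rw [← hw, sub_self, map_zero] at this
      exact this.symm
    rw [h0, map_zero] at hw
    exact sub_eq_zero.mp hw
  · obtain ⟨hDZ, hDAm, hDG⟩ := hD (V u)
    exact ⟨hDZ, hDAm, by rw [hDG]; exact hV1 u⟩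
end
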